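/- Let C₁, C₂ : ℝ → M₃(ℝ) with C₁ differentiable and C₁(x) invertible for every x, satisfying C₁(x)·C₁′(x) = C₁(x)C₂(x) − C₂(x)C₁(x) for all x. Then the functions x ↦ tr C₁(x), x ↦ tr(C₁(x)²), x ↦ tr(C₁(x)³), and x ↦ det C₁(x) are constant. -/

import Mathlib

private lemma hd_mul3 (A B A' B' : ℝ → Matrix (Fin 3) (Fin 3) ℝ) (x : ℝ)
    (hA : ∀ i j, HasDerivAt (fun t => A t i j) (A' x i j) x)
    (hB : ∀ i j, HasDerivAt (fun t => B t i j) (B' x i j) x) :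
    ∀ i j, HasDerivAt (fun t => (A t * B t) i j) ((A' x * B x + A x * B' x) i j) x := by
  intro i j
  have h : HasDerivAt (fun t => ∑ k, A t i k * B t k j)
      (∑ k, (A' x i k * B x k j + A x i k * B' x k j)) x :=
    HasDerivAt.fun_sum fun k _ => (hA i k).mul (hB k j)
  simpa [Matrix.mul_apply, Matrix.add_apply, Finset.sum_add_distrib] using h

private lemma hd_trace3 (M M' : ℝ → Matrix (Fin 3) (Fin 3) ℝ) (x : ℝ)
    (hM : ∀ i j, HasDerivAt (fun t => M t i j) (M' x i j) x) :
    HasDerivAt (fun t => (M t).trace) ((M' x).trace) x := by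
  simpa [Matrix.trace, Matrix.diag] using HasDerivAt.fun_sum (fun i (_ : i ∈ Finset.univ) => hM i i)

private lemma det3 (A : Matrix (Fin 3) (Fin 3) ℝ) :
    6 * A.det = A.trace ^ 3 - 3 * A.trace * (A ^ 2).trace + 2 * (A ^ 3).trace := by
  simp only [Matrix.det_fin_three, Matrix.trace_fin_three, pow_succ, pow_zero, one_mul,
    Matrix.mul_apply, Fin.sum_univ_three]
  ring

/-- For `C₁, C₂ : ℝ → M₃(ℝ)` with `C₁` differentiable (entrywise
derivative `C₁'`) and `C₁(x)` invertible for all `x`, satisfying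
`C₁(x)·C₁′(x) = C₁(x)C₂(x) − C₂(x)C₁(x)`, the functions `tr C₁`, `tr C₁²`,
`tr C₁³` and `det C₁` are constant. -/
theorem stmt_13 (C₁ C₂ C₁' : ℝ → Matrix (Fin 3) (Fin 3) ℝ)
    (hderiv : ∀ x : ℝ, ∀ i j, HasDerivAt (fun t => C₁ t i j) (C₁' x i j) x)
    (hinv : ∀ x : ℝ, IsUnit (C₁ x))
    (hLax : ∀ x : ℝ, C₁ x * C₁' x = C₁ x * C₂ x - C₂ x * C₁ x) :
    ∀ x y : ℝ,
      (C₁ x).trace = (C₁ y).trace ∧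
      ((C₁ x) ^ 2).trace = ((C₁ y) ^ 2).trace ∧
      ((C₁ x) ^ 3).trace = ((C₁ y) ^ 3).trace ∧
      (C₁ x).det = (C₁ y).det := by
  -- key trace vanishing facts
  have h1 : ∀ x, (C₁ x * C₁' x).trace = 0 := by
    intro x
    rw [hLax x, Matrix.trace_sub, Matrix.trace_mul_comm, sub_self]
  have h2 : ∀ x, (C₁ x * (C₁ x * C₁' x)).trace = 0 := by
    intro x
    rw [hLax x, mul_sub, Matrix.trace_sub, ← mul_assoc, ← mul_assoc,
      Matrix.trace_mul_comm (C₁ x * C₂ x) (C₁ x), ← mul_assoc, sub_self]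
  have h0 : ∀ x, (C₁' x).trace = 0 := by
    intro x
    have hd : IsUnit (C₁ x).det := (Matrix.isUnit_iff_isUnit_det (C₁ x)).mp (hinv x)
    have hinvmul : (C₁ x)⁻¹ * C₁ x = 1 := Matrix.nonsing_inv_mul _ hd
    have hmulinv : C₁ x * (C₁ x)⁻¹ = 1 := Matrix.mul_nonsing_inv _ hd
    have : C₁' x = (C₁ x)⁻¹ * (C₁ x * C₁' x) := by
      rw [← mul_assoc, hinvmul, one_mul]
    rw [this, hLax x, mul_sub, Matrix.trace_sub, ← mul_assoc, hinvmul, one_mul, ← mul_assoc,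
      Matrix.trace_mul_comm ((C₁ x)⁻¹ * C₂ x) (C₁ x), ← mul_assoc, hmulinv, one_mul, sub_self]
  -- derivatives of the trace functions vanish everywhere
  have hf1 : ∀ x, HasDerivAt (fun t => (C₁ t).trace) 0 x := by
    intro x
    have := hd_trace3 C₁ C₁' x (hderiv x)
    rwa [h0 x] at this
  have hf2 : ∀ x, HasDerivAt (fun t => (C₁ t * C₁ t).trace) 0 x := by
    intro x
    have hm := hd_mul3 C₁ C₁ C₁' C₁' x (hderiv x) (hderiv x)
    have := hd_trace3 (fun t => C₁ t * C₁ t) (fun t => C₁' t * C₁ t + C₁ t * C₁' t) x hm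
    have hz : (C₁' x * C₁ x + C₁ x * C₁' x).trace = 0 := by
      rw [Matrix.trace_add, Matrix.trace_mul_comm (C₁' x) (C₁ x), h1 x, add_zero]
    rwa [hz] at this
  have hf3 : ∀ x, HasDerivAt (fun t => (C₁ t * (C₁ t * C₁ t)).trace) 0 x := by
    intro x
    have hm := hd_mul3 C₁ C₁ C₁' C₁' x (hderiv x) (hderiv x)
    have hm2 := hd_mul3 C₁ (fun t => C₁ t * C₁ t) C₁'
      (fun t => C₁' t * C₁ t + C₁ t * C₁' t) x (hderiv x) hm
    have := hd_trace3 (fun t => C₁ t * (C₁ t * C₁ t))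
      (fun t => C₁' t * (C₁ t * C₁ t) + C₁ t * (C₁' t * C₁ t + C₁ t * C₁' t)) x hm2
    have hz : (C₁' x * (C₁ x * C₁ x) + C₁ x * (C₁' x * C₁ x + C₁ x * C₁' x)).trace = 0 := by
      have e2 : (C₁ x * (C₁' x * C₁ x)).trace = 0 := by
        rw [← mul_assoc, Matrix.trace_mul_comm (C₁ x * C₁' x) (C₁ x)]
        exact h2 x
      rw [Matrix.trace_add, mul_add, Matrix.trace_add,
        Matrix.trace_mul_comm (C₁' x) (C₁ x * C₁ x), mul_assoc, h2 x, e2]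
      ring
    rwa [hz] at this
  -- constancy
  have key : ∀ (f : ℝ → ℝ), (∀ x, HasDerivAt f 0 x) → ∀ x y, f x = f y := by
    intro f hf x y
    exact is_const_of_deriv_eq_zero (fun t => (hf t).differentiableAt)
      (fun t => (hf t).deriv) x y
  intro x y
  have t1 : (C₁ x).trace = (C₁ y).trace := key _ hf1 x y
  have t2 : ((C₁ x) ^ 2).trace = ((C₁ y) ^ 2).trace := by
    have := key _ hf2 x y
    simpa [pow_two] using this
  have t3 : ((C₁ x) ^ 3).trace = ((C₁ y) ^ 3).trace := by
    have := key _ hf3 x y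
    have e : ∀ t : ℝ, (C₁ t) ^ 3 = C₁ t * (C₁ t * C₁ t) := by
      intro t; rw [pow_succ, pow_two, mul_assoc]
    rw [e x, e y]; exact this
  refine ⟨t1, t2, t3, ?_⟩
  have d1 := det3 (C₁ x)
  have d2 := det3 (C₁ y)
  rw [t1, t2, t3] at d1
  nlinarith [d1, d2]
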